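/- arXiv:1012.5443 — 3 statements merged into one kernel-verified Lean document; each statement's English description precedes it below -/
import Mathlib

section
/- For natural numbers N, i with 0 ≤ i ≤ N, natural numbers k and q, one has C(N,i)·C(k+i,q) = Σ_{j=0}^{q} C(N,j)·C(k,q-j)·C(N-j,N-i), where C denotes the binomial coefficient. -/
theorem stmt4 (N i k q : ℕ) (hi : i ≤ N) :
    N.choose i * (k + i).choose q =
      ∑ j ∈ Finset.range (q + 1),
        N.choose j * k.choose (q - j) * (N - j).choose (N - i) := by
  rw [Nat.add_comm k i, Nat.add_choose_eq, Finset.Nat.sum_antidiagonal_eq_sum_range_succ_mk,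
    Finset.mul_sum]
  refine Finset.sum_congr rfl fun j hj => ?_
  simp only [Nat.add_sub_cancel_left] at *
  by_cases hji : j ≤ i
  · have h1 : N.choose i * i.choose j = N.choose j * (N - j).choose (i - j) :=
      Nat.choose_mul hji
    have h2 : (N - j).choose (i - j) = (N - j).choose (N - i) := by
      rw [← Nat.choose_symm (Nat.sub_le_sub_right hi j)]
      congr 1
      omega
    rw [← Nat.mul_assoc, h1, h2]
    ring
  · rw [Nat.choose_eq_zero_of_lt (by omega : i < j)]
    by_cases hjN : j ≤ N
    · rw [Nat.choose_eq_zero_of_lt (by omega : N - j < N - i)]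
      ring
    · rw [Nat.choose_eq_zero_of_lt (by omega : N < j)]
      ring
end

section
/- For complex Λ, an analytic function h, N ∈ ℕ, and t = w/z, one has Σ_{i=0}^{N} C(N,i) ∂_z^i ∂_w^{N-i} (z^Λ h(w/z)) = z^{Λ-N} Σ_{j=0}^{N} C(N,j) (Λ-N+1)_j (1 - w/z)^{N-j} h^{(N-j)}(w/z). -/
open Complex Finset Topology

-- derivative of z ↦ (-(w/z))^j
lemma hasDerivAt_negdiv (w : ℂ) (j : ℕ) (z : ℂ) (hz : z ≠ 0) :
    HasDerivAt (fun z : ℂ => (-(w / z)) ^ j) ((j : ℂ) * (-(w / z)) ^ j * (-z⁻¹)) z := by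
  have h0 := hasDerivAt_zpow (-(j:ℤ)) z (Or.inl hz)
  have h1 := h0.const_mul ((-w) ^ j)
  have key : ∀ x : ℂ, x ≠ 0 → (-(w / x)) ^ j = (-w) ^ j * x ^ (-(j:ℤ)) := by
    intro x hx
    rw [zpow_neg, zpow_natCast, ← neg_div, div_pow, div_eq_mul_inv]
  have hev : (fun z : ℂ => (-w) ^ j * z ^ (-(j:ℤ))) =ᶠ[𝓝 z] fun z => (-(w / z)) ^ j := by
    filter_upwards [isOpen_ne.mem_nhds (show z ≠ (0:ℂ) from hz)] with x hx
    exact (key x hx).symm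
  have h2 := h1.congr_of_eventuallyEq hev.symm
  refine h2.congr_deriv ?_
  rw [key z hz, zpow_sub_one₀ hz]
  push_cast
  ring

lemma hasDerivAt_comp_div {g : ℂ → ℂ} (hg : ContDiff ℂ (⊤ : ℕ∞) g) (w : ℂ) (j : ℕ) (z : ℂ)
    (hz : z ≠ 0) :
    HasDerivAt (fun z : ℂ => iteratedDeriv j g (w / z))
      (iteratedDeriv (j+1) g (w / z) * (w * -(z ^ 2)⁻¹)) z := by
  have hG : ContDiff ℂ (⊤ : ℕ∞) (iteratedDeriv j g) := by
    rw [iteratedDeriv_eq_iterate]; exact hg.iterate_deriv j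
  have hG1 : HasDerivAt (iteratedDeriv j g) (iteratedDeriv (j+1) g (w / z)) (w / z) := by
    have := (hG.differentiable (by simp) (w / z)).hasDerivAt
    rwa [iteratedDeriv_succ, show deriv (iteratedDeriv j g) (w/z) = _ from rfl] 
  have hu : HasDerivAt (fun z : ℂ => w / z) (w * -(z ^ 2)⁻¹) z := by
    simpa [div_eq_mul_inv] using (hasDerivAt_inv hz).const_mul w
  exact hG1.comp z hu

-- derivative of z ↦ z ^ c in convenient form
lemma hasDerivAt_cpow' (c : ℂ) (z : ℂ) (hzS : z ∈ Complex.slitPlane) :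
    HasDerivAt (fun z : ℂ => z ^ c) (c * z ^ c * z⁻¹) z := by
  have := (Complex.hasStrictDerivAt_cpow_const (c := c) hzS).hasDerivAt
  refine this.congr_deriv ?_
  rw [Complex.cpow_sub _ _ (Complex.slitPlane_ne_zero hzS), Complex.cpow_one]
  ring

-- coefficient recurrence
lemma coeff_rec (μ : ℂ) (i j : ℕ) (hji : j ∈ Finset.range (i + 2)) :
    (i.choose j : ℂ) * (∏ m ∈ range (i - j), (μ - j - m)) * (μ - i - j) +
      (if j = 0 then 0 else (i.choose (j-1) : ℂ) * ∏ m ∈ range (i - (j-1)), (μ - (j-1) - m))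
    = ((i+1).choose j : ℂ) * ∏ m ∈ range (i + 1 - j), (μ - j - m) := by
  simp only [mem_range] at hji
  rcases j with _ | j
  · simp only [if_pos rfl, Nat.choose_zero_right, Nat.cast_one, Nat.sub_zero, add_zero,
      Nat.cast_zero, sub_zero]
    rw [Finset.prod_range_succ]
    push_cast
    ring
  · simp only [Nat.succ_ne_zero, if_neg, Nat.succ_eq_add_one, Nat.add_sub_cancel,
      Nat.cast_add, Nat.cast_one, add_sub_cancel_right]
    rcases le_or_gt (j+1) i with hle | hgt
    · have hk : i - j = (i - (j+1)) + 1 := by omega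
      have hprod1 : (∏ m ∈ range (i - j), (μ - j - m))
          = (μ - j) * ∏ m ∈ range (i - (j+1)), (μ - (j+1) - m) := by
        rw [hk, Finset.prod_range_succ',
          Finset.prod_congr rfl (fun m _ => by
            push_cast
            ring : ∀ m ∈ range (i - (j+1)), (μ - (j:ℂ) - (↑(m+1) : ℂ)) = μ - ((j:ℂ)+1) - m)]
        push_cast
        ring
      have hprod2 : (∏ m ∈ range (i + 1 - (j+1)), (μ - (j+1) - m))
          = (∏ m ∈ range (i - (j+1)), (μ - (j+1) - m)) * (μ - i) := by
        have h3 : i + 1 - (j+1) = (i - (j+1)) + 1 := by omega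
        rw [h3, Finset.prod_range_succ,
          show ((i - (j+1) : ℕ) : ℂ) = (i : ℂ) - ((j:ℂ)+1) by
            push_cast [Nat.cast_sub hle]; ring]
        ring
      have h1 : ((i+1).choose (j+1) : ℂ) = (i.choose j : ℂ) + (i.choose (j+1) : ℂ) := by
        rw [Nat.choose_succ_succ]
        push_cast
        ring
      have h2 : (i.choose (j+1) : ℂ) * ((j:ℂ)+1) = (i.choose j : ℂ) * ((i:ℂ) - j) := by
        have hc := congrArg (Nat.cast : ℕ → ℂ) (Nat.choose_succ_right_eq i j)
        push_cast [Nat.cast_sub (le_of_lt (by omega : j < i))] at hc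
        exact hc
      rw [hprod1, hprod2]
      push_cast
      linear_combination (∏ m ∈ range (i - (j+1)), (μ - ((j:ℂ)+1) - m)) *
        (((i:ℂ) - μ) * h1 - h2)
    · have hji' : j = i := by omega
      subst hji'
      simp [Nat.choose_succ_self, Nat.sub_self, Nat.choose_self]

lemma keyK {g : ℂ → ℂ} (hg : ContDiff ℂ (⊤ : ℕ∞) g) (μ w : ℂ) (i : ℕ) :
    ∀ z ∈ Complex.slitPlane,
      iteratedDeriv i (fun z : ℂ => z ^ μ * g (w / z)) z
        = ∑ j ∈ range (i + 1), (i.choose j : ℂ) * (∏ m ∈ range (i - j), (μ - j - m)) *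
            (z ^ (μ - i) * ((-(w / z)) ^ j * iteratedDeriv j g (w / z))) := by
  induction i with
  | zero =>
    intro z hzS
    simp [iteratedDeriv_zero]
  | succ i IH =>
    intro z hzS
    have hz : z ≠ 0 := Complex.slitPlane_ne_zero hzS
    rw [iteratedDeriv_succ]
    have hev : iteratedDeriv i (fun z : ℂ => z ^ μ * g (w / z)) =ᶠ[𝓝 z]
        fun z => ∑ j ∈ range (i + 1), (i.choose j : ℂ) * (∏ m ∈ range (i - j), (μ - j - m)) *
            (z ^ (μ - i) * ((-(w / z)) ^ j * iteratedDeriv j g (w / z))) := by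
      filter_upwards [Complex.isOpen_slitPlane.mem_nhds hzS] with x hx using IH x hx
    rw [hev.deriv_eq]
    -- derivative of each summand
    have hterm : ∀ j ∈ range (i + 1),
        HasDerivAt (fun z : ℂ => (i.choose j : ℂ) * (∏ m ∈ range (i - j), (μ - j - m)) *
            (z ^ (μ - i) * ((-(w / z)) ^ j * iteratedDeriv j g (w / z))))
          ((i.choose j : ℂ) * (∏ m ∈ range (i - j), (μ - j - m)) *
            ((z ^ (μ - i) * z⁻¹) * ((μ - i - j) * ((-(w / z)) ^ j * iteratedDeriv j g (w / z))
              + (-(w / z)) ^ (j+1) * iteratedDeriv (j+1) g (w / z)))) z := by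
      intro j _
      have hA := hasDerivAt_cpow' (μ - i) z hzS
      have hB := hasDerivAt_negdiv w j z hz
      have hC := hasDerivAt_comp_div hg w j z hz
      have := (hA.mul (hB.mul hC)).const_mul
        ((i.choose j : ℂ) * (∏ m ∈ range (i - j), (μ - j - m)))
      refine this.congr_deriv ?_
      have hw : w * -((z:ℂ) ^ 2)⁻¹ = (-(w/z)) * z⁻¹ := by
        rw [sq]; field_simp
      rw [hw]
      simp only [Pi.mul_apply]
      ring
    rw [deriv_fun_sum (fun j hj => (hterm j hj).differentiableAt)]
    rw [Finset.sum_congr rfl (fun j hj => (hterm j hj).deriv)]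
    -- now pure algebra of sums
    have hE : (z : ℂ) ^ (μ - ((i:ℕ)+1:ℕ)) = z ^ (μ - i) * z⁻¹ := by
      rw [show μ - (((i:ℕ)+1:ℕ):ℂ) = (μ - i) - 1 by push_cast; ring,
        Complex.cpow_sub _ _ hz, Complex.cpow_one, div_eq_mul_inv]
    rw [Finset.sum_congr rfl (fun j (hj : j ∈ range (i+1+1)) => by
      rw [hE] : ∀ j ∈ range (i+1+1), ((i+1).choose j : ℂ) *
          (∏ m ∈ range (i+1-j), (μ - j - m)) *
          (z ^ (μ - ((i:ℕ)+1:ℕ)) * ((-(w / z)) ^ j * iteratedDeriv j g (w / z)))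
        = ((i+1).choose j : ℂ) * (∏ m ∈ range (i+1-j), (μ - j - m)) *
          (z ^ (μ - i) * z⁻¹ * ((-(w / z)) ^ j * iteratedDeriv j g (w / z))))]
    calc
      ∑ j ∈ range (i + 1), (i.choose j : ℂ) * (∏ m ∈ range (i - j), (μ - j - m)) *
          (z ^ (μ - i) * z⁻¹ * ((μ - i - j) * ((-(w / z)) ^ j * iteratedDeriv j g (w / z))
            + (-(w / z)) ^ (j+1) * iteratedDeriv (j+1) g (w / z)))
        = ∑ j ∈ range (i + 1),
            ((z ^ (μ - i) * z⁻¹ * (((i.choose j : ℂ) * (∏ m ∈ range (i - j), (μ - j - m)) * (μ - i - j)) *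
              ((-(w / z)) ^ j * iteratedDeriv j g (w / z))))
            + (z ^ (μ - i) * z⁻¹ * ((i.choose j : ℂ) * (∏ m ∈ range (i - j), (μ - j - m)) *
              ((-(w / z)) ^ (j+1) * iteratedDeriv (j+1) g (w / z))))) :=
        Finset.sum_congr rfl (fun j _ => by ring)
      _ = (∑ j ∈ range (i + 1),
            z ^ (μ - i) * z⁻¹ * (((i.choose j : ℂ) * (∏ m ∈ range (i - j), (μ - j - m)) * (μ - i - j)) *
              ((-(w / z)) ^ j * iteratedDeriv j g (w / z))))
          + ∑ j ∈ range (i + 1),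
            z ^ (μ - i) * z⁻¹ * ((i.choose j : ℂ) * (∏ m ∈ range (i - j), (μ - j - m)) *
              ((-(w / z)) ^ (j+1) * iteratedDeriv (j+1) g (w / z))) :=
        Finset.sum_add_distrib
      _ = (∑ j ∈ range (i + 2),
            z ^ (μ - i) * z⁻¹ * (((i.choose j : ℂ) * (∏ m ∈ range (i - j), (μ - j - m)) * (μ - i - j)) *
              ((-(w / z)) ^ j * iteratedDeriv j g (w / z))))
          + ∑ j ∈ range (i + 2),
            (if j = 0 then 0 else
              z ^ (μ - i) * z⁻¹ * ((i.choose (j-1) : ℂ) * (∏ m ∈ range (i - (j-1)), (μ - (j-1) - m)) *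
                ((-(w / z)) ^ j * iteratedDeriv j g (w / z)))) := by
        rw [Finset.sum_range_succ (n := i+1), Finset.sum_range_succ' _ (i+1)]
        simp [Nat.choose_succ_self]
      _ = ∑ j ∈ range (i + 2),
            (z ^ (μ - i) * z⁻¹ * (((i.choose j : ℂ) * (∏ m ∈ range (i - j), (μ - j - m)) * (μ - i - j)) *
              ((-(w / z)) ^ j * iteratedDeriv j g (w / z)))
            + if j = 0 then 0 else
              z ^ (μ - i) * z⁻¹ * ((i.choose (j-1) : ℂ) * (∏ m ∈ range (i - (j-1)), (μ - (j-1) - m)) *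
                ((-(w / z)) ^ j * iteratedDeriv j g (w / z)))) :=
        Finset.sum_add_distrib.symm
      _ = ∑ j ∈ range (i + 1 + 1), ((i+1).choose j : ℂ) * (∏ m ∈ range (i+1-j), (μ - j - m)) *
            (z ^ (μ - i) * z⁻¹ * ((-(w / z)) ^ j * iteratedDeriv j g (w / z))) := by
        refine Finset.sum_congr rfl (fun j hj => ?_)
        have hcr := coeff_rec μ i j hj
        split_ifs at hcr ⊢ with h0 <;>
          linear_combination (z ^ (μ - (i:ℂ)) * z⁻¹ *
            ((-(w / z)) ^ j * iteratedDeriv j g (w / z))) * hcr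

lemma iteratedDeriv_cmul {f : ℂ → ℂ} (hf : ContDiff ℂ (⊤ : ℕ∞) f) (c : ℂ) (n : ℕ) (x : ℂ) :
    iteratedDeriv n (fun w => c * f w) x = c * iteratedDeriv n f x := by
  rw [← iteratedDerivWithin_univ, ← iteratedDerivWithin_univ]
  exact iteratedDerivWithin_const_mul (Set.mem_univ x) uniqueDiffOn_univ c
    ((hf.of_le (m := (n : WithTop ℕ∞)) (by exact_mod_cast le_top)).contDiffWithinAt)

lemma inner_deriv {g : ℂ → ℂ} (hg : ContDiff ℂ (⊤ : ℕ∞) g) (z : ℂ) (hz : z ≠ 0) (c : ℂ) (k : ℕ)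
    (w : ℂ) :
    iteratedDeriv k (fun w => c * g (w / z)) w = c * (z⁻¹) ^ k * iteratedDeriv k g (w / z) := by
  have h1 : (fun w : ℂ => c * g (w / z)) = fun w => c * g (z⁻¹ * w) := by
    funext w; rw [div_eq_mul_inv, mul_comm w]
  have hcomp : ContDiff ℂ (⊤ : ℕ∞) (fun w : ℂ => g (z⁻¹ * w)) :=
    hg.comp ((contDiff_const.mul contDiff_id))
  rw [h1, iteratedDeriv_cmul hcomp c k w,
    iteratedDeriv_comp_const_mul (hg.of_le (m := (k : WithTop ℕ∞)) (by exact_mod_cast le_top)) z⁻¹]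
  beta_reduce
  rw [div_eq_mul_inv, mul_comm w]
  ring

lemma prod_reflect (c : ℂ) (n : ℕ) :
    (∏ m ∈ range n, (c + n - m)) = ∏ m ∈ range n, (c + 1 + m) := by
  induction n with
  | zero => simp
  | succ n IH =>
    rw [Finset.prod_range_succ', Finset.prod_range_succ,
      Finset.prod_congr rfl (fun m _ => by push_cast; ring :
        ∀ m ∈ range n, (c + ((n:ℕ)+1:ℕ) - ((m+1:ℕ):ℂ)) = c + (n:ℂ) - m)]
    rw [IH]
    push_cast
    ring

lemma tri (N : ℕ) (t : ℂ) (H : ℕ → ℂ) (P : ℕ → ℂ) :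
    (∑ i ∈ range (N+1), ∑ j ∈ range (i+1),
      (N.choose i : ℂ) * (i.choose j : ℂ) * P (i-j) * (t^j * H (N - (i-j))))
  = ∑ k ∈ range (N+1), ∑ j ∈ range (N-k+1),
      (N.choose k : ℂ) * P k * ((N-k).choose j : ℂ) * (t^j * H (N-k)) := by
  rw [Finset.sum_sigma', Finset.sum_sigma']
  refine Finset.sum_nbij' (fun p => ⟨p.1 - p.2, p.2⟩) (fun p => ⟨p.1 + p.2, p.2⟩) ?_ ?_ ?_ ?_ ?_
  · rintro ⟨i, j⟩ hp
    simp only [Finset.mem_sigma, mem_range] at hp ⊢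
    omega
  · rintro ⟨k, j⟩ hp
    simp only [Finset.mem_sigma, mem_range] at hp ⊢
    omega
  · rintro ⟨i, j⟩ hp
    simp only [Finset.mem_sigma, mem_range] at hp
    have h1 : i - j + j = i := by omega
    simp [h1]
  · rintro ⟨k, j⟩ hp
    simp only [Finset.mem_sigma, mem_range] at hp
    have h1 : k + j - j = k := by omega
    simp [h1]
  · rintro ⟨i, j⟩ hp
    simp only [Finset.mem_sigma, mem_range] at hp
    have hji : j ≤ i := by omega
    have hiN : i ≤ N := by omega
    have hchoose : (N.choose i) * (i.choose j) = N.choose (i-j) * ((N-(i-j)).choose j) := by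
      rw [← Nat.choose_symm hji, Nat.choose_mul (n := N) (Nat.sub_le i j),
        show i - (i - j) = j by omega]
    have : (N.choose i : ℂ) * (i.choose j : ℂ) = (N.choose (i-j) : ℂ) * ((N-(i-j)).choose j : ℂ) := by
      exact_mod_cast congrArg (Nat.cast : ℕ → ℂ) hchoose
    rw [this]
    ring

theorem stmt9 (Λ : ℂ) (h : ℂ → ℂ) (hh : AnalyticOn ℂ h Set.univ)
    (N : ℕ) (z w : ℂ) (hz : z ∈ Complex.slitPlane) :
    (∑ i ∈ Finset.range (N + 1), (N.choose i : ℂ) *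
        iteratedDeriv i
          (fun z : ℂ => iteratedDeriv (N - i) (fun w : ℂ => z ^ Λ * h (w / z)) w) z) =
      z ^ (Λ - N) * ∑ j ∈ Finset.range (N + 1), (N.choose j : ℂ) *
        (∏ m ∈ Finset.range j, (Λ - N + 1 + m)) *
        (1 - w / z) ^ (N - j) * iteratedDeriv (N - j) h (w / z) := by
  have hc : ContDiff ℂ (⊤ : ℕ∞) h := (analyticOn_univ.mp hh).contDiff
  have hz0 : z ≠ 0 := Complex.slitPlane_ne_zero hz
  have step12 : ∀ i ∈ range (N+1),
      iteratedDeriv i (fun z : ℂ => iteratedDeriv (N - i) (fun w : ℂ => z ^ Λ * h (w / z)) w) z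
      = ∑ j ∈ range (i + 1), ((i.choose j : ℂ) * ∏ m ∈ range (i - j),
            (Λ - ((N-i:ℕ):ℂ) - j - m)) *
          (z ^ (Λ - ((N-i:ℕ):ℂ) - i) * ((-(w / z)) ^ j *
            iteratedDeriv j (iteratedDeriv (N-i) h) (w / z))) := by
    intro i _
    have hgc : ContDiff ℂ (⊤ : ℕ∞) (iteratedDeriv (N-i) h) := by
      rw [iteratedDeriv_eq_iterate]; exact hc.iterate_deriv _
    have hev : (fun z : ℂ => iteratedDeriv (N - i) (fun w : ℂ => z ^ Λ * h (w / z)) w) =ᶠ[𝓝 z]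
        (fun z : ℂ => z ^ (Λ - ((N-i:ℕ):ℂ)) * iteratedDeriv (N-i) h (w / z)) := by
      filter_upwards [Complex.isOpen_slitPlane.mem_nhds hz] with x hx
      have hx0 : x ≠ 0 := Complex.slitPlane_ne_zero hx
      rw [inner_deriv hc x hx0 (x ^ Λ) (N-i) w,
        Complex.cpow_sub _ _ hx0, Complex.cpow_natCast, inv_pow]
      ring
    exact (hev.iteratedDeriv_eq i).trans (keyK hgc _ w i z hz)
  calc
    (∑ i ∈ Finset.range (N + 1), (N.choose i : ℂ) *
        iteratedDeriv i
          (fun z : ℂ => iteratedDeriv (N - i) (fun w : ℂ => z ^ Λ * h (w / z)) w) z)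
      = ∑ i ∈ range (N+1), (N.choose i : ℂ) *
          ∑ j ∈ range (i + 1), ((i.choose j : ℂ) * ∏ m ∈ range (i - j),
              (Λ - ((N-i:ℕ):ℂ) - j - m)) *
            (z ^ (Λ - ((N-i:ℕ):ℂ) - i) * ((-(w / z)) ^ j *
              iteratedDeriv j (iteratedDeriv (N-i) h) (w / z))) :=
      Finset.sum_congr rfl (fun i hi => by rw [step12 i hi])
    _ = ∑ i ∈ range (N+1), ∑ j ∈ range (i+1),
          (N.choose i : ℂ) * (i.choose j : ℂ) * (∏ m ∈ range (i-j), (Λ - (N:ℂ) + 1 + m)) *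
            ((-(w / z)) ^ j * (z ^ (Λ - (N:ℂ)) * iteratedDeriv (N - (i-j)) h (w / z))) := by
      refine Finset.sum_congr rfl fun i hi => ?_
      rw [Finset.mul_sum]
      refine Finset.sum_congr rfl fun j hj => ?_
      simp only [mem_range] at hi hj
      have hiN : i ≤ N := by omega
      have hji : j ≤ i := by omega
      have ha : Λ - ((N-i:ℕ):ℂ) - i = Λ - N := by
        push_cast [Nat.cast_sub hiN]; ring
      have hb : iteratedDeriv j (iteratedDeriv (N-i) h) (w/z)
          = iteratedDeriv (N-(i-j)) h (w/z) := by
        rw [iteratedDeriv_eq_iterate, iteratedDeriv_eq_iterate, iteratedDeriv_eq_iterate,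
          ← Function.iterate_add_apply, show j + (N-i) = N - (i-j) by omega]
      have hcp : (∏ m ∈ range (i-j), (Λ - ((N-i:ℕ):ℂ) - j - m))
          = ∏ m ∈ range (i-j), (Λ - (N:ℂ) + 1 + m) := by
        rw [← prod_reflect (Λ - (N:ℂ)) (i - j)]
        refine Finset.prod_congr rfl fun m hm => ?_
        push_cast [Nat.cast_sub hiN, Nat.cast_sub hji]
        ring
      rw [ha, hb, hcp]
      ring
    _ = ∑ k ∈ range (N+1), ∑ j ∈ range (N-k+1),
          (N.choose k : ℂ) * (∏ m ∈ range k, (Λ - (N:ℂ) + 1 + m)) * ((N-k).choose j : ℂ) *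
            ((-(w / z)) ^ j * (z ^ (Λ - (N:ℂ)) * iteratedDeriv (N-k) h (w / z))) := by
      exact tri N (-(w/z)) (fun n => z ^ (Λ - (N:ℂ)) * iteratedDeriv n h (w / z))
        (fun k => ∏ m ∈ range k, (Λ - (N:ℂ) + 1 + m)) |>.trans (by
          refine Finset.sum_congr rfl fun k _ => Finset.sum_congr rfl fun j _ => by ring) |>.symm
        |>.symm
    _ = z ^ (Λ - N) * ∑ j ∈ Finset.range (N + 1), (N.choose j : ℂ) *
        (∏ m ∈ Finset.range j, (Λ - N + 1 + m)) *
        (1 - w / z) ^ (N - j) * iteratedDeriv (N - j) h (w / z) := by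
      rw [Finset.mul_sum]
      refine Finset.sum_congr rfl fun k _ => ?_
      have hbin : ((-(w/z)) + 1) ^ (N-k)
          = ∑ j ∈ range (N-k+1), ((N-k).choose j : ℂ) * (-(w/z))^j := by
        rw [add_pow]
        exact Finset.sum_congr rfl fun j _ => by rw [one_pow]; ring
      calc
        (∑ j ∈ range (N-k+1),
            (N.choose k : ℂ) * (∏ m ∈ range k, (Λ - (N:ℂ) + 1 + m)) * ((N-k).choose j : ℂ) *
              ((-(w / z)) ^ j * (z ^ (Λ - (N:ℂ)) * iteratedDeriv (N-k) h (w / z))))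
          = (N.choose k : ℂ) * (∏ m ∈ range k, (Λ - (N:ℂ) + 1 + m)) *
              (z ^ (Λ - (N:ℂ)) * iteratedDeriv (N-k) h (w / z)) *
              ∑ j ∈ range (N-k+1), ((N-k).choose j : ℂ) * (-(w/z))^j := by
            rw [Finset.mul_sum]
            exact Finset.sum_congr rfl fun j _ => by ring
        _ = z ^ (Λ - (N:ℂ)) * ((N.choose k : ℂ) * (∏ m ∈ range k, (Λ - (N:ℂ) + 1 + m)) *
              (1 - w / z) ^ (N - k) * iteratedDeriv (N - k) h (w / z)) := by
            rw [← hbin, show ((-(w/z)) + 1 : ℂ) = 1 - w/z by ring]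
            ring
end

section
/- Let X(λ,μ,ν) = (C(λ,ℓ)·C(μ,ℓ)/C((λ+μ+ν+2)/2, ℓ)) · ∏_{j=ν+2}^{(λ+μ+ν+2)/2} 1/(j² - κ²), where ℓ = (λ+μ-ν)/2, defined whenever λ+μ+ν is even and 0 ≤ ℓ ≤ min(λ,μ). With X(1,n+1,n) = (n+1)/(n+2) · 1/((n+2)² - κ²), the constants X satisfy the recursion X(λ+1,μ,ν) = -((λ+1)(λ-μ-ν-1)/((ν+1)(λ+μ-ν+1))) · X(1,ν+1,ν) · X(λ,μ,ν+1), whenever both sides are defined (i.e., λ+1+μ+ν even, |λ+1-μ| ≤ ν ≤ λ+1+μ, and ν+1 ≤ λ+μ). -/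
/-- The structure constants `X_{λ,μ}^ν` of the VOA of rank 26. -/
noncomputable def structX (κ : ℂ) (l μ ν : ℕ) : ℂ :=
  if (l + μ + ν) % 2 = 0 ∧ ν ≤ l + μ ∧ μ ≤ l + ν ∧ l ≤ μ + ν then
    ((l.choose ((l + μ - ν) / 2) : ℂ) * (μ.choose ((l + μ - ν) / 2) : ℂ) /
        (((l + μ + ν + 2) / 2).choose ((l + μ - ν) / 2) : ℂ)) *
      ∏ j ∈ Finset.Icc (ν + 2) ((l + μ + ν + 2) / 2), ((j : ℂ) ^ 2 - κ ^ 2)⁻¹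
  else 0

theorem stmt15 (κ : ℂ) (hκ : ∀ q : ℚ, (q : ℂ) ≠ κ) (l μ ν : ℕ)
    (hpar : (l + 1 + μ + ν) % 2 = 0) (h1 : ν ≤ l + 1 + μ)
    (h2 : l + 1 ≤ μ + ν) (h3 : μ ≤ l + 1 + ν) (h4 : ν + 1 ≤ l + μ) :
    structX κ (l + 1) μ ν =
      -(((l : ℂ) + 1) * ((l : ℂ) - μ - ν - 1) /
          (((ν : ℂ) + 1) * ((l : ℂ) + μ - ν + 1))) *
        structX κ 1 (ν + 1) ν * structX κ l μ (ν + 1) := by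
  obtain ⟨m, hm⟩ : ∃ m, l + μ = ν + 1 + 2 * m := ⟨(l + μ - ν - 1) / 2, by omega⟩
  rw [structX, structX, structX, if_pos (by omega), if_pos (by omega), if_pos (by omega)]
  have e1 : (l + 1 + μ - ν) / 2 = m + 1 := by omega
  have e2 : (l + 1 + μ + ν + 2) / 2 = ν + m + 2 := by omega
  have e3 : (l + μ - (ν + 1)) / 2 = m := by omega
  have e4 : (l + μ + (ν + 1) + 2) / 2 = ν + m + 2 := by omega
  have e5 : (1 + (ν + 1) - ν) / 2 = 1 := by omega
  have e6 : (1 + (ν + 1) + ν + 2) / 2 = ν + 2 := by omega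
  rw [e1, e2, e3, e4, e5, e6]
  -- split the product
  have hsplit : ∏ j ∈ Finset.Icc (ν + 2) (ν + m + 2), ((j : ℂ) ^ 2 - κ ^ 2)⁻¹
      = (((ν + 2 : ℕ) : ℂ) ^ 2 - κ ^ 2)⁻¹ *
        ∏ j ∈ Finset.Icc (ν + 3) (ν + m + 2), ((j : ℂ) ^ 2 - κ ^ 2)⁻¹ := by
    rw [← Finset.Ico_add_one_right_eq_Icc, Finset.prod_eq_prod_Ico_succ_bot (by omega),
      Finset.Ico_add_one_right_eq_Icc]
  rw [hsplit, Finset.Icc_self, Finset.prod_singleton]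
  have hl : (l : ℂ) + μ = (ν : ℂ) + 1 + 2 * m := by exact_mod_cast congrArg (Nat.cast : ℕ → ℂ) hm
  have hl2 : (l : ℂ) - μ - ν - 1 = -2 * ((μ : ℂ) - m) := by linear_combination hl
  have hl3 : (l : ℂ) + μ - ν + 1 = 2 * ((m : ℂ) + 1) := by linear_combination hl
  rw [hl2, hl3]
  have hm1 : ((m : ℂ) + 1) ≠ 0 := Nat.cast_add_one_ne_zero m
  have hA : ((l + 1).choose (m + 1) : ℂ) = ((l : ℂ) + 1) * (l.choose m) / ((m : ℂ) + 1) := by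
    rw [eq_div_iff hm1]
    exact_mod_cast congrArg (Nat.cast : ℕ → ℂ) (Nat.add_one_mul_choose_eq l m).symm
  have hμm : m ≤ μ := by omega
  have hB : (μ.choose (m + 1) : ℂ) = (μ.choose m) * ((μ : ℂ) - m) / ((m : ℂ) + 1) := by
    rw [eq_div_iff hm1, ← Nat.cast_sub hμm]
    exact_mod_cast congrArg (Nat.cast : ℕ → ℂ) (Nat.choose_succ_right_eq μ m)
  have hN : ((ν + m + 2).choose (m + 1) : ℂ)
      = ((ν + m + 2).choose m) * ((ν : ℂ) + 2) / ((m : ℂ) + 1) := by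
    rw [eq_div_iff hm1]
    have := Nat.choose_succ_right_eq (ν + m + 2) m
    have h' : ν + m + 2 - m = ν + 2 := by omega
    rw [h'] at this
    exact_mod_cast congrArg (Nat.cast : ℕ → ℂ) this
  simp only [Nat.choose_self, Nat.choose_one_right]
  push_cast
  rw [show ν + 1 + 2 = ν + 3 from rfl]
  have hCN : (((ν + m + 2).choose m : ℕ) : ℂ) ≠ 0 :=
    Nat.cast_ne_zero.mpr (Nat.choose_pos (by omega)).ne'
  have hν1 : ((ν : ℂ) + 1) ≠ 0 := Nat.cast_add_one_ne_zero ν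
  have hν2 : ((ν : ℂ) + 2) ≠ 0 := by
    have : ((ν + 2 : ℕ) : ℂ) ≠ 0 := Nat.cast_ne_zero.mpr (by omega)
    push_cast at this; exact this
  have hC : ((l + 1).choose (m + 1) : ℂ) * (μ.choose (m + 1) : ℂ) / ((ν + m + 2).choose (m + 1) : ℂ)
      = -(((l : ℂ) + 1) * (-2 * ((μ : ℂ) - (m : ℂ))) / (((ν : ℂ) + 1) * (2 * ((m : ℂ) + 1)))) *
          (1 * ((ν : ℂ) + 1) / ((ν : ℂ) + 2)) *
        ((l.choose m : ℂ) * (μ.choose m : ℂ) / ((ν + m + 2).choose m : ℂ)) := by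
    rw [hA, hB, hN]
    set a := (l.choose m : ℂ)
    set b := (μ.choose m : ℂ)
    set c := (((ν + m + 2).choose m : ℕ) : ℂ)
    set x := (l : ℂ)
    set y := (μ : ℂ)
    set z := (ν : ℂ)
    set w := (m : ℂ)
    rw [div_mul_div_comm, div_div_div_eq, ← neg_div, div_mul_div_comm, div_mul_div_comm,
      div_eq_div_iff (mul_ne_zero (mul_ne_zero hm1 hm1) (mul_ne_zero hCN hν2))
        (mul_ne_zero (mul_ne_zero (mul_ne_zero hν1 (mul_ne_zero two_ne_zero hm1)) hν2) hCN)]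
    ring
  linear_combination (((ν : ℂ) + 2) ^ 2 - κ ^ 2)⁻¹ *
    (∏ j ∈ Finset.Icc (ν + 3) (ν + m + 2), ((j : ℂ) ^ 2 - κ ^ 2)⁻¹) * hC
end
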